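/- Suppose ā₁, ā₂ ∈ (ℕ⁺)ⁿ and c̄₁, c̄₂ ∈ (ℕ⁺)^m are tuples such that σ(ā₁) ∩ σ(c̄₁) = ∅ and σ(ā₂) ∩ σ(c̄₂) = ∅. If for every L-formula φ(v₁,…,vₙ) one has ℕ⁺ ⊨ φ(ā₁) ⇔ ℕ⁺ ⊨ φ(ā₂), and for every L-formula ψ(w₁,…,w_m) one has ℕ⁺ ⊨ ψ(c̄₁) ⇔ ℕ⁺ ⊨ ψ(c̄₂), then for every L-formula χ(v₁,…,vₙ,w₁,…,w_m) one has ℕ⁺ ⊨ χ(ā₁, c̄₁) ⇔ ℕ⁺ ⊨ χ(ā₂, c̄₂). -/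

import Mathlib

open FirstOrder Language

/-- The language `L` with one binary function symbol `·` and one constant symbol `1`. -/
def L : FirstOrder.Language :=
  ⟨fun n => match n with | 0 => Unit | 2 => Unit | _ => Empty, fun _ => Empty⟩

/-- Any monoid is an `L`-structure, with `·` interpreted as multiplication and `1` as the
identity. In particular `ℕ+` is the standard model of Skolem arithmetic, and
`Multiplicative ℕ` is the additive `L`-structure `(ℕ, +, 0)`. -/
instance (M : Type*) [Monoid M] : L.Structure M where
  funMap {n} f x :=
    match n, f, x with
    | 0, _, _ => 1
    | 2, _, x => x 0 * x 1
  RelMap r _ := r.elim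

/-- The support of a tuple: the set of primes dividing some component. -/
def PSupp {n : ℕ} (a : Fin n → ℕ+) : Set ℕ := {p | p.Prime ∧ ∃ i, p ∣ (a i : ℕ)}

namespace Scratch
variable {α : Type*} {M : Type*} [Monoid M]

def tone : L.Term α := Term.func (L := L) (l := 0) () ![]
def tmul (t s : L.Term α) : L.Term α := Term.func (L := L) (l := 2) () ![t, s]

@[simp] lemma realize_tone (v : α → M) : (tone : L.Term α).realize v = 1 := rfl
@[simp] lemma realize_tmul (t s : L.Term α) (v : α → M) :
    (tmul t s).realize v = t.realize v * s.realize v := rfl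

def tpow (t : L.Term α) : ℕ → L.Term α
  | 0 => tone
  | k+1 => tmul (tpow t k) t

@[simp] lemma realize_tpow (t : L.Term α) (k : ℕ) (v : α → M) :
    (tpow t k).realize v = t.realize v ^ k := by
  induction k with
  | zero => simp [tpow]
  | succ k ih => simp [tpow, ih, pow_succ]

def tprod : List (L.Term α) → L.Term α
  | [] => tone
  | t :: l => tmul t (tprod l)

@[simp] lemma realize_tprod (l : List (L.Term α)) (v : α → M) :
    (tprod l).realize v = (l.map fun t => t.realize v).prod := by
  induction l with
  | nil => simp [tprod]
  | cons t l ih => simp [tprod, ih]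

end Scratch

namespace Scratch2
open Scratch FirstOrder Language Term

/-- Formula saying the single free variable is irreducible. -/
def primeFml : L.Formula (Fin 1) :=
  (∼(Term.bdEqual (var (Sum.inl 0)) tone)) ⊓
    (BoundedFormula.all (BoundedFormula.all
      ((Term.bdEqual (tmul (var (Sum.inr 0)) (var (Sum.inr 1))) (var (Sum.inl 0))).imp
        ((Term.bdEqual (var (Sum.inr 0)) tone) ⊔ (Term.bdEqual (var (Sum.inr 1)) tone)))))

lemma realize_primeFml (x : ℕ+) : primeFml.Realize (fun _ => x) ↔ (x : ℕ).Prime := by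
  have : primeFml.Realize (fun _ => x) ↔
      (x ≠ 1 ∧ ∀ a b : ℕ+, a * b = x → a = 1 ∨ b = 1) := by
    simp [primeFml, Formula.Realize, Fin.snoc]
  rw [this]
  constructor
  · rintro ⟨hx1, H⟩
    rw [← Nat.irreducible_iff_nat_prime]
    refine ⟨?_, ?_⟩
    · rw [Nat.isUnit_iff]
      intro h
      exact hx1 (PNat.coe_injective (by simpa using h))
    · intro a b hab
      have ha : 0 < a := by
        rcases Nat.eq_zero_or_pos a with h | h
        · exfalso; rw [h, zero_mul] at hab; exact absurd hab x.pos.ne'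
        · exact h
      have hb : 0 < b := by
        rcases Nat.eq_zero_or_pos b with h | h
        · exfalso; rw [h, mul_zero] at hab; exact absurd hab x.pos.ne'
        · exact h
      rcases H ⟨a, ha⟩ ⟨b, hb⟩ (PNat.coe_injective (by exact hab.symm)) with h | h
      · left; rw [Nat.isUnit_iff]; exact congrArg (PNat.val) h
      · right; rw [Nat.isUnit_iff]; exact congrArg (PNat.val) h
  · intro hp
    refine ⟨?_, ?_⟩
    · intro h; rw [h] at hp; exact Nat.not_prime_one (by simpa using hp)
    · intro a b hab
      have hd : (a : ℕ) ∣ (x : ℕ) := ⟨b, by rw [← hab]; simp⟩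
      rcases hp.eq_one_or_self_of_dvd _ hd with h | h
      · left; exact PNat.coe_injective (by simpa using h)
      · right
        have hax : a = x := PNat.coe_injective (by simpa using h)
        rw [hax] at hab
        exact mul_eq_left.mp hab

end Scratch2

namespace Scratch3
open Scratch Scratch2 FirstOrder Language Term
variable {α : Type*} [Fintype α]
set_option linter.unusedSectionVars false

noncomputable def bigFml (r : ℕ) (E : Fin r → α → ℕ) : L.Formula α :=
  BoundedFormula.exs (
    ((BoundedFormula.iInf fun i : α =>
       Term.bdEqual (var (Sum.inl i))
         (tprod ((List.finRange r).map fun j => tpow (var (Sum.inr j)) (E j i))))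
    ⊓ (BoundedFormula.iInf fun j : Fin r =>
        (BoundedFormula.relabel (fun _ => Sum.inr j) primeFml))
    ⊓ (BoundedFormula.iInf fun jj : Fin r × Fin r =>
         if jj.1 = jj.2 then ⊤
         else ∼(Term.bdEqual (var (Sum.inr jj.1)) (var (Sum.inr jj.2)))) : L.BoundedFormula α r))

lemma realize_bd0 {β : Type*} (φ : L.Formula β) (v : β → ℕ+) (xs : Fin 0 → ℕ+) :
    BoundedFormula.Realize φ v xs ↔ φ.Realize v := by
  exact Iff.of_eq (congrArg (fun z => BoundedFormula.Realize φ v z) (Subsingleton.elim xs _))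

lemma realize_bigFml (r : ℕ) (E : Fin r → α → ℕ) (a : α → ℕ+) :
    (bigFml r E).Realize a ↔ ∃ q : Fin r → ℕ+,
      (∀ j, ((q j : ℕ)).Prime) ∧ Function.Injective q ∧
        ∀ i, a i = ∏ j, q j ^ E j i := by
  rw [bigFml, BoundedFormula.realize_exs]
  apply exists_congr
  intro q
  simp only [BoundedFormula.realize_inf, BoundedFormula.realize_iInf, Finset.mem_univ,
    forall_true_left, BoundedFormula.realize_bdEqual, Term.realize_var, Sum.elim_inl,
    Sum.elim_inr, realize_tprod, realize_tpow, BoundedFormula.realize_relabel,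
    BoundedFormula.realize_not, BoundedFormula.realize_top, true_and]
  constructor
  · rintro ⟨⟨h1, h2⟩, h3⟩
    refine ⟨?_, ?_, ?_⟩
    · intro j
      have := h2 j
      rw [show (Sum.elim a (q ∘ Fin.castAdd 0) ∘ fun _ : Fin 1 => Sum.inr j) = fun _ => q j from rfl,
        realize_bd0, realize_primeFml] at this
      exact this
    · intro j j' hqq
      by_contra hne
      have := h3 (j, j')
      simp [hne] at this
      exact this hqq
    · intro i
      have := h1 i
      rw [this, Fin.prod_univ_def]
      simp [Function.comp_def]
  · rintro ⟨hp, hinj, hprod⟩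
    refine ⟨⟨?_, ?_⟩, ?_⟩
    · intro i
      rw [hprod i, Fin.prod_univ_def]
      simp [Function.comp_def]
    · intro j
      rw [show (Sum.elim a (q ∘ Fin.castAdd 0) ∘ fun _ : Fin 1 => Sum.inr j) = fun _ => q j from rfl,
        realize_bd0, realize_primeFml]
      exact hp j
    · intro jj
      by_cases h : jj.1 = jj.2
      · simp [h]
      · simp [h]
        intro hq
        exact h (hinj hq)

end Scratch3

namespace Scratch4
open FirstOrder Language

abbrev PP := {p : ℕ // p.Prime}

noncomputable def pe (e : Equiv.Perm PP) (p : ℕ) : ℕ+ :=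
  if h : p.Prime then ⟨(e ⟨p, h⟩ : ℕ), (e ⟨p, h⟩).2.pos⟩ else 1

noncomputable def permApp (e : Equiv.Perm PP) (x : ℕ+) : ℕ+ :=
  (x : ℕ).factorization.prod fun p k => pe e p ^ k

lemma permApp_one (e : Equiv.Perm PP) : permApp e 1 = 1 := by
  simp [permApp]

lemma permApp_mul (e : Equiv.Perm PP) (x y : ℕ+) :
    permApp e (x * y) = permApp e x * permApp e y := by
  unfold permApp
  rw [PNat.mul_coe, Nat.factorization_mul x.pos.ne' y.pos.ne',
    Finsupp.prod_add_index (fun p _ => pow_zero (pe e p)) (fun p _ b c => pow_add (pe e p) b c)]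

noncomputable def permHom (e : Equiv.Perm PP) : ℕ+ →* ℕ+ :=
  ⟨⟨permApp e, permApp_one e⟩, fun x y => permApp_mul e x y⟩

def pLift (q : PP) : ℕ+ := ⟨q.1, q.2.pos⟩

lemma permApp_pLift (e : Equiv.Perm PP) (q : PP) :
    permApp e (pLift q) = pLift (e q) := by
  unfold permApp pLift
  change ((q.1).factorization.prod fun p k => pe e p ^ k) = _
  rw [Nat.Prime.factorization q.2]
  rw [Finsupp.prod_single_index (by simp)]
  simp [pe, q.2]
  exact pow_one _

lemma permApp_invol (e : Equiv.Perm PP) (x : ℕ+) :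
    permApp e.symm (permApp e x) = x := by
  induction x using PNat.strongInductionOn with
  | _ x ih =>
    by_cases hx : x = 1
    · subst hx; rw [permApp_one, permApp_one]
    · obtain ⟨p, hp, hpd⟩ := Nat.exists_prime_and_dvd
        (fun h : (x : ℕ) = 1 => hx (PNat.coe_injective (h.trans PNat.one_coe.symm)))
      have hPd : Nat.toPNat p hp.pos ∣ x := PNat.dvd_iff.mpr hpd
      obtain ⟨y, hy⟩ := hPd
      have hylt : y < x := by
        rw [hy, ← PNat.coe_lt_coe, PNat.mul_coe]
        calc (y : ℕ) = 1 * y := (one_mul _).symm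
          _ < p * y := (Nat.mul_lt_mul_right y.2).mpr hp.one_lt
      have hP : Nat.toPNat p hp.pos = pLift ⟨p, hp⟩ := rfl
      rw [hy, permApp_mul, permApp_mul, hP, permApp_pLift, permApp_pLift, ih y hylt,
        Equiv.symm_apply_apply]


noncomputable def permLEquiv (e : Equiv.Perm PP) : ℕ+ ≃[L] ℕ+ where
  toFun := permApp e
  invFun := permApp e.symm
  left_inv := permApp_invol e
  right_inv := fun x => by
    have := permApp_invol e.symm x
    rwa [Equiv.symm_symm] at this
  map_fun' := fun {k} f x => by
    match k, f with
    | 0, _ => exact permApp_one e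
    | 1, f => exact Empty.elim f
    | 2, _ => exact permApp_mul e (x 0) (x 1)
    | (k+3), f => exact Empty.elim f
  map_rel' := fun {k} r _ => Empty.elim r

set_option linter.unnecessarySimpa false in
lemma exists_perm_extend {X : Type*} [Infinite X] [Countable X] {ι : Type*} [Finite ι]
    (f g : ι → X) (hf : Function.Injective f) (hg : Function.Injective g) :
    ∃ e : Equiv.Perm X, ∀ j, e (f j) = g j := by
  classical
  haveI : Infinite ↥(Set.range f)ᶜ := ((Set.finite_range f).infinite_compl).to_subtype
  haveI : Infinite ↥(Set.range g)ᶜ := ((Set.finite_range g).infinite_compl).to_subtype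
  obtain ⟨df⟩ := nonempty_denumerable ↥(Set.range f)ᶜ
  obtain ⟨dg⟩ := nonempty_denumerable ↥(Set.range g)ᶜ
  let e₁ : ↥(Set.range f)ᶜ ≃ ℕ := @Denumerable.eqv _ df
  let e₂ : ↥(Set.range g)ᶜ ≃ ℕ := @Denumerable.eqv _ dg
  let eR : ↥(Set.range f) ≃ ↥(Set.range g) :=
    (Equiv.ofInjective f hf).symm.trans (Equiv.ofInjective g hg)
  refine ⟨(Equiv.Set.sumCompl (Set.range f)).symm.trans
    ((Equiv.sumCongr eR (e₁.trans e₂.symm)).trans (Equiv.Set.sumCompl (Set.range g))), fun j => ?_⟩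
  have h1 : (Equiv.Set.sumCompl (Set.range f)).symm (f j)
      = Sum.inl ⟨f j, Set.mem_range_self j⟩ :=
    Equiv.Set.sumCompl_symm_apply_of_mem (Set.mem_range_self j)
  simp only [Equiv.trans_apply, h1, Equiv.sumCongr_apply, Sum.map_inl,
    Equiv.Set.sumCompl_apply_inl]
  have h2 : eR ⟨f j, Set.mem_range_self j⟩ = ⟨g j, Set.mem_range_self j⟩ := by
    simp only [eR, Equiv.trans_apply]
    have : (Equiv.ofInjective f hf).symm ⟨f j, Set.mem_range_self j⟩ = j := by
      apply hf
      simpa using congrArg Subtype.val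
        (Equiv.apply_symm_apply (Equiv.ofInjective f hf) ⟨f j, Set.mem_range_self j⟩)
    rw [this]
    rfl
  rw [h2]


lemma exists_data {n : ℕ} (a : Fin n → ℕ+) :
    ∃ (r : ℕ) (p : Fin r → ℕ+) (E : Fin r → Fin n → ℕ),
      (∀ j, ((p j : ℕ)).Prime) ∧ Function.Injective p ∧
      (∀ i, a i = ∏ j, p j ^ E j i) ∧ (∀ j, ∃ i, E j i ≠ 0) := by
  classical
  set s : Finset ℕ := Finset.univ.biUnion (fun i : Fin n => ((a i : ℕ)).primeFactors) with hs
  have hsp : ∀ x ∈ s, x.Prime := by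
    intro x hx
    obtain ⟨i, _, hxi⟩ := Finset.mem_biUnion.mp hx
    exact Nat.prime_of_mem_primeFactors hxi
  have hsub : ∀ i, ((a i : ℕ)).factorization.support ⊆ s := by
    intro i x hx
    rw [Nat.support_factorization] at hx
    exact Finset.mem_biUnion.mpr ⟨i, Finset.mem_univ i, hx⟩
  refine ⟨s.card, fun j => Nat.toPNat (s.equivFin.symm j : ℕ) (hsp _ (s.equivFin.symm j).2).pos,
    fun j i => ((a i : ℕ)).factorization (s.equivFin.symm j : ℕ), ?_, ?_, ?_, ?_⟩
  · intro j
    exact hsp _ (s.equivFin.symm j).2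
  · intro j j' h
    have : (s.equivFin.symm j : ℕ) = (s.equivFin.symm j' : ℕ) := congrArg PNat.val h
    exact s.equivFin.symm.injective (Subtype.ext this)
  · intro i
    apply PNat.coe_injective
    have hcoe : ((∏ j, Nat.toPNat (s.equivFin.symm j : ℕ) (hsp _ (s.equivFin.symm j).2).pos ^
          ((a i : ℕ)).factorization (s.equivFin.symm j : ℕ) : ℕ+) : ℕ)
        = ∏ j, ((s.equivFin.symm j : ℕ)) ^ ((a i : ℕ)).factorization (s.equivFin.symm j : ℕ) := by
      rw [show ((∏ j, Nat.toPNat (s.equivFin.symm j : ℕ) (hsp _ (s.equivFin.symm j).2).pos ^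
          ((a i : ℕ)).factorization (s.equivFin.symm j : ℕ) : ℕ+) : ℕ)
        = PNat.coeMonoidHom (∏ j, Nat.toPNat (s.equivFin.symm j : ℕ) (hsp _ (s.equivFin.symm j).2).pos ^
          ((a i : ℕ)).factorization (s.equivFin.symm j : ℕ)) from rfl, map_prod]
      exact Finset.prod_congr rfl fun j _ => PNat.pow_coe _ _
    rw [hcoe]
    have h2 := Equiv.prod_comp s.equivFin.symm
      (fun x : ↥s => (x : ℕ) ^ ((a i : ℕ)).factorization (x : ℕ))
    rw [h2, Finset.prod_coe_sort s (fun x => x ^ ((a i : ℕ)).factorization x)]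
    rw [← Finsupp.prod_of_support_subset ((a i : ℕ)).factorization (hsub i)
      (fun x k => x ^ k) (fun x _ => pow_zero x)]
    exact (Nat.factorization_prod_pow_eq_self (a i).pos.ne').symm
  · intro j
    have hj : (s.equivFin.symm j : ℕ) ∈ s := (s.equivFin.symm j).2
    obtain ⟨i, _, hji⟩ := Finset.mem_biUnion.mp hj
    exact ⟨i, by
      have := Nat.Prime.factorization_pos_of_dvd (hsp _ (s.equivFin.symm j).2)
        (a i).pos.ne' (Nat.dvd_of_mem_primeFactors hji)
      exact this.ne'⟩

end Scratch4

open Scratch Scratch2 Scratch3 Scratch4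

lemma mem_psupp {k r : ℕ} {b : Fin k → ℕ+} {q : Fin r → ℕ+} {E : Fin r → Fin k → ℕ}
    (hprod : ∀ i, b i = ∏ j, q j ^ E j i) {j : Fin r} {i : Fin k} (hE : E j i ≠ 0)
    (hq : (q j : ℕ).Prime) : (q j : ℕ) ∈ PSupp b := by
  refine ⟨hq, i, ?_⟩
  have h1 : q j ∣ b i := by
    rw [hprod i]
    exact dvd_trans (dvd_pow_self (q j) hE) (Finset.dvd_prod_of_mem _ (Finset.mem_univ j))
  exact PNat.dvd_iff.mp h1

/-- Coprime products of pairwise conjugate tuples are conjugate. -/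
theorem conjugate_coprime_products (n m : ℕ) (a₁ a₂ : Fin n → ℕ+) (c₁ c₂ : Fin m → ℕ+)
    (h₁ : PSupp a₁ ∩ PSupp c₁ = ∅) (h₂ : PSupp a₂ ∩ PSupp c₂ = ∅)
    (ha : ∀ φ : L.Formula (Fin n), φ.Realize a₁ ↔ φ.Realize a₂)
    (hc : ∀ ψ : L.Formula (Fin m), ψ.Realize c₁ ↔ ψ.Realize c₂) :
    ∀ χ : L.Formula (Fin n ⊕ Fin m),
      χ.Realize (Sum.elim a₁ c₁) ↔ χ.Realize (Sum.elim a₂ c₂) := by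
  classical
  intro χ
  obtain ⟨rA, pA, EA, hpA, hinjA, hprodA, hEA⟩ := exists_data a₁
  obtain ⟨rC, pC, EC, hpC, hinjC, hprodC, hEC⟩ := exists_data c₁
  obtain ⟨qA, hqA, hinjQA, hprodQA⟩ := (realize_bigFml rA EA a₂).mp
    ((ha _).mp ((realize_bigFml rA EA a₁).mpr ⟨pA, hpA, hinjA, hprodA⟩))
  obtain ⟨qC, hqC, hinjQC, hprodQC⟩ := (realize_bigFml rC EC c₂).mp
    ((hc _).mp ((realize_bigFml rC EC c₁).mpr ⟨pC, hpC, hinjC, hprodC⟩))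
  have hdisj1 : ∀ (j : Fin rA) (k : Fin rC), (pA j : ℕ) ≠ (pC k : ℕ) := by
    intro j k h
    obtain ⟨i, hi⟩ := hEA j
    obtain ⟨i', hi'⟩ := hEC k
    have m1 : (pA j : ℕ) ∈ PSupp a₁ := mem_psupp hprodA hi (hpA j)
    have m2 : (pA j : ℕ) ∈ PSupp c₁ := h ▸ mem_psupp hprodC hi' (hpC k)
    exact Set.eq_empty_iff_forall_notMem.mp h₁ _ ⟨m1, m2⟩
  have hdisj2 : ∀ (j : Fin rA) (k : Fin rC), (qA j : ℕ) ≠ (qC k : ℕ) := by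
    intro j k h
    obtain ⟨i, hi⟩ := hEA j
    obtain ⟨i', hi'⟩ := hEC k
    have m1 : (qA j : ℕ) ∈ PSupp a₂ := mem_psupp hprodQA hi (hqA j)
    have m2 : (qA j : ℕ) ∈ PSupp c₂ := h ▸ mem_psupp hprodQC hi' (hqC k)
    exact Set.eq_empty_iff_forall_notMem.mp h₂ _ ⟨m1, m2⟩
  haveI : Infinite PP := Set.infinite_coe_iff.mpr Nat.infinite_setOf_prime
  let f : Fin rA ⊕ Fin rC → PP :=
    Sum.elim (fun j => ⟨(pA j : ℕ), hpA j⟩) (fun k => ⟨(pC k : ℕ), hpC k⟩)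
  let g : Fin rA ⊕ Fin rC → PP :=
    Sum.elim (fun j => ⟨(qA j : ℕ), hqA j⟩) (fun k => ⟨(qC k : ℕ), hqC k⟩)
  have hfinj : Function.Injective f := by
    rintro (u | u) (v | v) h <;> simp only [f, Sum.elim_inl, Sum.elim_inr] at h
    · exact congrArg Sum.inl (hinjA (PNat.coe_injective (congrArg (Subtype.val : PP → ℕ) h)))
    · exact absurd (congrArg (Subtype.val : PP → ℕ) h) (hdisj1 u v)
    · exact absurd (congrArg (Subtype.val : PP → ℕ) h).symm (hdisj1 v u)
    · exact congrArg Sum.inr (hinjC (PNat.coe_injective (congrArg (Subtype.val : PP → ℕ) h)))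
  have hginj : Function.Injective g := by
    rintro (u | u) (v | v) h <;> simp only [g, Sum.elim_inl, Sum.elim_inr] at h
    · exact congrArg Sum.inl (hinjQA (PNat.coe_injective (congrArg (Subtype.val : PP → ℕ) h)))
    · exact absurd (congrArg (Subtype.val : PP → ℕ) h) (hdisj2 u v)
    · exact absurd (congrArg (Subtype.val : PP → ℕ) h).symm (hdisj2 v u)
    · exact congrArg Sum.inr (hinjQC (PNat.coe_injective (congrArg (Subtype.val : PP → ℕ) h)))
  obtain ⟨e, he⟩ := exists_perm_extend f g hfinj hginj
  let F := permLEquiv e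
  have hkey : ∀ (u : Fin rA ⊕ Fin rC), permApp e (pLift (f u)) = pLift (g u) := by
    intro u
    rw [permApp_pLift, he]
  have hFa : ∀ i, F (a₁ i) = a₂ i := by
    intro i
    show permHom e (a₁ i) = a₂ i
    rw [hprodA i, map_prod, hprodQA i]
    refine Finset.prod_congr rfl fun j _ => ?_
    rw [map_pow]
    congr 1
    exact hkey (Sum.inl j)
  have hFc : ∀ i, F (c₁ i) = c₂ i := by
    intro i
    show permHom e (c₁ i) = c₂ i
    rw [hprodC i, map_prod, hprodQC i]
    refine Finset.prod_congr rfl fun j _ => ?_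
    rw [map_pow]
    congr 1
    exact hkey (Sum.inr j)
  have hcomp : (F : ℕ+ → ℕ+) ∘ Sum.elim a₁ c₁ = Sum.elim a₂ c₂ := by
    funext x
    cases x with
    | inl i => exact hFa i
    | inr i => exact hFc i
  rw [← hcomp]
  exact (FirstOrder.Language.StrongHomClass.realize_formula F χ).symm
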